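/- Let m, d be positive integers, 0 < δ < 1, and let G be a finite abelian group with |G| ≥ 24 m^d. Let A ⊆ G. Let X be a uniformly random 12m^d-element subset of G and Y a uniformly random m-element subset of G (independent). If the event that the set system {(A + x) ∩ Y : x ∈ X} has VC dimension at most d occurs with probability at least e^{−m^d} + 3m^{2d}(1−δ)^m, then B = {x ∈ G : |A Δ (A + x)| ≤ δ|G|} satisfies |B| ≥ |G|/(12 m^d). -/

import Mathlib

open Finset

lemma aux_descFac_mul_le (a n r c e : ℕ) (h : ∀ i < r, c * (a - i) ≤ e * (n - i)) :
    c ^ r * a.descFactorial r ≤ e ^ r * n.descFactorial r := by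
  rw [Nat.descFactorial_eq_prod_range, Nat.descFactorial_eq_prod_range]
  have hc : c ^ r = ∏ _i ∈ range r, c := by rw [prod_const, card_range]
  have he : e ^ r = ∏ _i ∈ range r, e := by rw [prod_const, card_range]
  rw [hc, he, ← prod_mul_distrib, ← prod_mul_distrib]
  exact Finset.prod_le_prod (fun i _ => Nat.zero_le _)
    (fun i hi => h i (Finset.mem_range.1 hi))

lemma aux_choose_mul_le (a n r c e : ℕ) (h : ∀ i < r, c * (a - i) ≤ e * (n - i)) :
    c ^ r * a.choose r ≤ e ^ r * n.choose r := by
  have h1 := aux_descFac_mul_le a n r c e h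
  rw [Nat.descFactorial_eq_factorial_mul_choose, Nat.descFactorial_eq_factorial_mul_choose] at h1
  have h2 : r.factorial * (c ^ r * a.choose r) ≤ r.factorial * (e ^ r * n.choose r) := by
    calc r.factorial * (c ^ r * a.choose r) = c ^ r * (r.factorial * a.choose r) := by ring
    _ ≤ e ^ r * (r.factorial * n.choose r) := h1
    _ = r.factorial * (e ^ r * n.choose r) := by ring
  exact Nat.le_of_mul_le_mul_left h2 (Nat.factorial_pos r)

lemma aux_choose_le_ratio (a n m : ℕ) (han : a ≤ n) (hn : 0 < n) :
    (a.choose m : ℝ) ≤ ((a : ℝ) / n) ^ m * n.choose m := by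
  have h : ∀ i < m, n * (a - i) ≤ a * (n - i) := by
    intro i _
    calc n * (a - i) = n * a - n * i := by rw [Nat.mul_sub]
    _ ≤ n * a - a * i := Nat.sub_le_sub_left (Nat.mul_le_mul_right i han) _
    _ = a * (n - i) := by rw [Nat.mul_sub, Nat.mul_comm a n]
  have h1 := aux_choose_mul_le a n m n a h
  have h1r : ((n : ℝ)) ^ m * a.choose m ≤ (a : ℝ) ^ m * n.choose m := by exact_mod_cast h1
  have hnm : (0 : ℝ) < (n : ℝ) ^ m := by positivity
  rw [div_pow, div_mul_eq_mul_div, le_div_iff₀ hnm]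
  calc (a.choose m : ℝ) * (n : ℝ) ^ m = (n : ℝ) ^ m * a.choose m := by ring
  _ ≤ (a : ℝ) ^ m * n.choose m := h1r

lemma aux_sum_choose_le (m d : ℕ) (hm : 2 ≤ m) :
    ∑ i ∈ range (d + 1), m.choose i ≤ 2 * m ^ d := by
  induction d with
  | zero => simp
  | succ d ih =>
    rw [Finset.sum_range_succ]
    have h1 : m.choose (d + 1) ≤ m ^ (d + 1) := Nat.choose_le_pow m (d + 1)
    have h2 : 2 * m ^ d ≤ m ^ (d + 1) := by
      rw [pow_succ, mul_comm (m ^ d) m]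
      exact Nat.mul_le_mul_right _ hm
    calc ∑ i ∈ range (d + 1), m.choose i + m.choose (d + 1)
        ≤ 2 * m ^ d + m ^ (d + 1) := Nat.add_le_add ih h1
    _ ≤ m ^ (d + 1) + m ^ (d + 1) := Nat.add_le_add_right h2 _
    _ = 2 * m ^ (d + 1) := by ring

lemma aux_two_mul_add_one_le (t : ℕ) : 2 * t + 1 ≤ 3 ^ t := by
  induction t with
  | zero => simp
  | succ t ih =>
    have h : 1 ≤ 3 ^ t := Nat.one_le_pow _ _ (by norm_num)
    rw [pow_succ]
    omega

lemma aux_family_card_le {G : Type*} [DecidableEq G] (𝒜 : Finset (Finset G)) (Y : Finset G)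
    (m d : ℕ) (hm : 1 ≤ m) (hd : 1 ≤ d) (hY : Y.card = m)
    (hsub : ∀ a ∈ 𝒜, a ⊆ Y) (hvc : 𝒜.vcDim ≤ d) : 𝒜.card ≤ 2 * m ^ d := by
  rcases eq_or_lt_of_le hm with h1 | h2
  · have hsub' : 𝒜 ⊆ Y.powerset := fun a ha => Finset.mem_powerset.2 (hsub a ha)
    calc 𝒜.card ≤ Y.powerset.card := card_le_card hsub'
    _ = 2 ^ m := by rw [Finset.card_powerset, hY]
    _ ≤ 2 * m ^ d := by rw [← h1]; simp
  · have hsh : 𝒜.shatterer ⊆ (range (d + 1)).biUnion (fun i => Y.powersetCard i) := by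
      intro s hs
      have hs' := Finset.mem_shatterer.1 hs
      obtain ⟨u, hu, hsu⟩ := hs'.exists_superset
      have hcard : s.card ≤ d := le_trans hs'.card_le_vcDim hvc
      exact Finset.mem_biUnion.2 ⟨s.card, Finset.mem_range.2 (Nat.lt_succ_of_le hcard),
        Finset.mem_powersetCard.2 ⟨hsu.trans (hsub u hu), rfl⟩⟩
    calc 𝒜.card ≤ 𝒜.shatterer.card := Finset.card_le_card_shatterer 𝒜
    _ ≤ ((range (d + 1)).biUnion (fun i => Y.powersetCard i)).card := card_le_card hsh
    _ ≤ ∑ i ∈ range (d + 1), (Y.powersetCard i).card := Finset.card_biUnion_le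
    _ = ∑ i ∈ range (d + 1), m.choose i := by simp [Finset.card_powersetCard, hY]
    _ ≤ 2 * m ^ d := aux_sum_choose_le m d h2

theorem stmt_12 {G : Type*} [AddCommGroup G] [Fintype G] [DecidableEq G]
    (m d : ℕ) (hm : 1 ≤ m) (hd : 1 ≤ d) (δ : ℝ) (hδ0 : 0 < δ) (hδ1 : δ < 1)
    (hG : 24 * m ^ d ≤ Fintype.card G) (A : Finset G)
    (hprob : (Real.exp (-(m : ℝ) ^ d) + 3 * (m : ℝ) ^ (2 * d) * (1 - δ) ^ m) *
        (((Fintype.card G).choose (12 * m ^ d)) * ((Fintype.card G).choose m)) ≤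
      ((((univ : Finset G).powersetCard (12 * m ^ d)) ×ˢ
          ((univ : Finset G).powersetCard m)).filter fun p =>
        (p.1.image fun x => (A.image (· + x)) ∩ p.2).vcDim ≤ d).card) :
    (Fintype.card G : ℝ) / (12 * m ^ d) ≤
      ((univ.filter fun x : G =>
        ((symmDiff A (A.image (· + x))).card : ℝ) ≤ δ * Fintype.card G).card : ℝ) := by
  classical
  by_contra hcon
  push_neg at hcon
  set n := Fintype.card G with hn
  set t := m ^ d with ht
  set k := 12 * t with hk
  set B := univ.filter fun x : G =>
    ((symmDiff A (A.image (· + x))).card : ℝ) ≤ δ * n with hBdef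
  -- basic numeric facts
  have ht1 : 1 ≤ t := Nat.one_le_pow d m hm
  have hn24 : 24 * t ≤ n := hG
  have h2kn : 2 * k ≤ n := by omega
  have hkn : k ≤ n := by omega
  have hn0 : 0 < n := by omega
  have hmt : m ≤ t := Nat.le_self_pow (by omega) m
  have hmn : m ≤ n := by omega
  have hkB : k * B.card < n := by
    have h12 : (0 : ℝ) < 12 * (m : ℝ) ^ d := by positivity
    have h1 : (B.card : ℝ) * (12 * (m : ℝ) ^ d) < n := (lt_div_iff₀ h12).1 hcon
    have h2 : ((k * B.card : ℕ) : ℝ) < (n : ℝ) := by push_cast [hk, ht]; nlinarith [h1]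
    exact_mod_cast h2
  have hB0 : (0 : G) ∈ B := by
    have himg : A.image (· + (0:G)) = A := by simp
    rw [hBdef, mem_filter]
    refine ⟨mem_univ _, ?_⟩
    rw [himg, symmDiff_self]
    have : ((⊥ : Finset G).card : ℝ) = 0 := by simp
    rw [this]
    positivity
  have hDcard : ∀ x y : G, (symmDiff (A.image (· + x)) (A.image (· + y))).card
      = (symmDiff A (A.image (· + (y - x)))).card := by
    intro x y
    have h1 : (symmDiff (A.image (· + x)) (A.image (· + y))).image (· + (-x))
        = symmDiff A (A.image (· + (y - x))) := by
      rw [Finset.image_symmDiff _ _ (add_left_injective (-x)), image_image, image_image]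
      congr 1
      · ext a; simp
      · ext a; simp [sub_eq_add_neg, add_assoc]
    rw [← h1, card_image_of_injective _ (add_left_injective (-x))]
  have hBsymm : ∀ x : G, x ∈ B → -x ∈ B := by
    intro x hx
    rw [hBdef, mem_filter] at hx ⊢
    refine ⟨mem_univ _, ?_⟩
    have h1 := hDcard x 0
    have h2 : A.image (· + (0:G)) = A := by simp
    rw [h2, zero_sub, symmDiff_comm] at h1
    rw [← h1]
    exact hx.2
  have hpair : ∀ x y : G, y - x ∉ B →
      ((((univ:Finset G).powersetCard m).filter fun Y =>
        (A.image (· + x)) ∩ Y = (A.image (· + y)) ∩ Y).card : ℝ)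
      ≤ (1 - δ) ^ m * (n.choose m) := by
    intro x y hxy
    set D := symmDiff (A.image (· + x)) (A.image (· + y)) with hD
    have hDn : (δ * n : ℝ) < D.card := by
      rw [hBdef, mem_filter] at hxy
      push_neg at hxy
      have h := hxy (mem_univ _)
      rw [hD, hDcard x y]
      exact h
    have hsub : (((univ:Finset G).powersetCard m).filter fun Y =>
        (A.image (· + x)) ∩ Y = (A.image (· + y)) ∩ Y) ⊆ Dᶜ.powersetCard m := by
      intro Y hY
      rw [mem_filter, mem_powersetCard] at hY
      obtain ⟨⟨_, hYm⟩, hcol⟩ := hY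
      rw [mem_powersetCard]
      refine ⟨fun g hg => ?_, hYm⟩
      rw [mem_compl]
      intro hgD
      rw [hD, Finset.mem_symmDiff] at hgD
      rcases hgD with ⟨h1, h2⟩ | ⟨h1, h2⟩
      · exact h2 (mem_of_mem_inter_left (hcol ▸ mem_inter.2 ⟨h1, hg⟩))
      · exact h2 (mem_of_mem_inter_left (hcol.symm ▸ mem_inter.2 ⟨h1, hg⟩))
    have hc1 : (((univ:Finset G).powersetCard m).filter fun Y =>
        (A.image (· + x)) ∩ Y = (A.image (· + y)) ∩ Y).card ≤ (n - D.card).choose m := by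
      have h := card_le_card hsub
      rw [card_powersetCard, card_compl] at h
      exact h
    have hDle : D.card ≤ n := card_le_univ D
    have h2 : ((n - D.card).choose m : ℝ) ≤ (((n - D.card : ℕ) : ℝ) / n) ^ m * n.choose m :=
      aux_choose_le_ratio _ n m (Nat.sub_le _ _) hn0
    have h3 : (((n - D.card : ℕ) : ℝ) / n) ^ m ≤ (1 - δ) ^ m := by
      apply pow_le_pow_left₀ (by positivity)
      rw [div_le_iff₀ (by exact_mod_cast hn0), Nat.cast_sub hDle]
      nlinarith [hDn]
    calc ((((univ:Finset G).powersetCard m).filter fun Y =>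
        (A.image (· + x)) ∩ Y = (A.image (· + y)) ∩ Y).card : ℝ)
        ≤ ((n - D.card).choose m : ℝ) := by exact_mod_cast hc1
    _ ≤ (((n - D.card : ℕ) : ℝ) / n) ^ m * n.choose m := h2
    _ ≤ (1 - δ) ^ m * n.choose m := by
        apply mul_le_mul_of_nonneg_right h3 (by positivity)
  set P := (univ : Finset G).powersetCard k with hP
  set Q := (univ : Finset G).powersetCard m with hQ
  have hchoose2 : (2 * t + 1).choose 2 ≤ 3 * t ^ 2 := by
    have h2 : 2 * t + 1 - 1 = 2 * t := by omega
    have h1 : (2 * t + 1).choose 2 = 2 * t ^ 2 + t := by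
      rw [Nat.choose_two_right, h2]
      have h3 : (2 * t + 1) * (2 * t) = (2 * t ^ 2 + t) * 2 := by ring
      rw [h3, Nat.mul_div_cancel _ (by norm_num)]
    rw [h1]
    nlinarith [ht1]
  have hgood : ∀ X : Finset G, ∀ S : Finset G, S ⊆ X → S.card = 2 * t + 1 →
      (∀ x ∈ S, ∀ y ∈ S, x ≠ y → x - y ∉ B) →
      ((Q.filter fun Y => ((X.image fun x => (A.image (· + x)) ∩ Y).vcDim ≤ d)).card : ℝ)
        ≤ 3 * (t : ℝ) ^ 2 * (1 - δ) ^ m * n.choose m := by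
    intro X S hSX hScard hSind
    have hsub : (Q.filter fun Y => ((X.image fun x => (A.image (· + x)) ∩ Y).vcDim ≤ d))
        ⊆ (S.powersetCard 2).biUnion (fun P2 => Q.filter fun Y =>
            ∃ x ∈ P2, ∃ y ∈ P2, x ≠ y ∧ (A.image (· + x)) ∩ Y = (A.image (· + y)) ∩ Y) := by
      intro Y hY
      rw [mem_filter] at hY
      obtain ⟨hYQ, hvc⟩ := hY
      have hYm : Y.card = m := (mem_powersetCard.1 hYQ).2
      have hex : ∃ x ∈ S, ∃ y ∈ S, x ≠ y ∧
          (A.image (· + x)) ∩ Y = (A.image (· + y)) ∩ Y := by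
        by_contra hno
        push_neg at hno
        have hinj : Set.InjOn (fun x => (A.image (· + x)) ∩ Y) S := by
          intro u hu v hv huv
          by_contra hne
          exact hno u hu v hv hne huv
        have hcard1 : (S.image fun x => (A.image (· + x)) ∩ Y).card = 2 * t + 1 := by
          rw [card_image_of_injOn hinj, hScard]
        have hsub2 : (S.image fun x => (A.image (· + x)) ∩ Y)
            ⊆ (X.image fun x => (A.image (· + x)) ∩ Y) := image_subset_image hSX
        have hle : 2 * t + 1 ≤ (X.image fun x => (A.image (· + x)) ∩ Y).card := by
          rw [← hcard1]; exact card_le_card hsub2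
        have hle2 : (X.image fun x => (A.image (· + x)) ∩ Y).card ≤ 2 * m ^ d := by
          apply aux_family_card_le _ Y m d hm hd hYm _ hvc
          intro a ha
          obtain ⟨x, _, rfl⟩ := mem_image.1 ha
          exact inter_subset_right
        rw [← ht] at hle2
        omega
      obtain ⟨x, hxS, y, hyS, hxy, hcol⟩ := hex
      refine mem_biUnion.2 ⟨{x, y}, ?_, ?_⟩
      · rw [mem_powersetCard]
        exact ⟨insert_subset_iff.2 ⟨hxS, singleton_subset_iff.2 hyS⟩, card_pair hxy⟩
      · rw [mem_filter]
        exact ⟨hYQ, x, mem_insert_self _ _, y, by simp, hxy, hcol⟩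
    have hcb : ∀ P2 ∈ S.powersetCard 2,
        ((Q.filter fun Y => ∃ x ∈ P2, ∃ y ∈ P2, x ≠ y ∧
          (A.image (· + x)) ∩ Y = (A.image (· + y)) ∩ Y).card : ℝ)
        ≤ (1 - δ) ^ m * n.choose m := by
      intro P2 hP2
      rw [mem_powersetCard] at hP2
      obtain ⟨hP2S, hP2c⟩ := hP2
      obtain ⟨x, y, hxy, rfl⟩ := card_eq_two.1 hP2c
      have hxS : x ∈ S := hP2S (mem_insert_self _ _)
      have hyS : y ∈ S := hP2S (by simp)
      have hsub3 : (Q.filter fun Y => ∃ u ∈ ({x, y} : Finset G), ∃ v ∈ ({x, y} : Finset G),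
          u ≠ v ∧ (A.image (· + u)) ∩ Y = (A.image (· + v)) ∩ Y)
          ⊆ Q.filter fun Y => (A.image (· + x)) ∩ Y = (A.image (· + y)) ∩ Y := by
        intro Y hY
        rw [mem_filter] at hY ⊢
        obtain ⟨hYQ, u, hu, v, hv, huv, hcol⟩ := hY
        refine ⟨hYQ, ?_⟩
        simp only [mem_insert, mem_singleton] at hu hv
        rcases hu with rfl | rfl <;> rcases hv with rfl | rfl
        · exact absurd rfl huv
        · exact hcol
        · exact hcol.symm
        · exact absurd rfl huv
      have hp := hpair x y (hSind y hyS x hxS hxy.symm)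
      calc ((Q.filter fun Y => ∃ u ∈ ({x, y} : Finset G), ∃ v ∈ ({x, y} : Finset G),
          u ≠ v ∧ (A.image (· + u)) ∩ Y = (A.image (· + v)) ∩ Y).card : ℝ)
          ≤ ((Q.filter fun Y =>
            (A.image (· + x)) ∩ Y = (A.image (· + y)) ∩ Y).card : ℝ) := by
            exact_mod_cast card_le_card hsub3
      _ ≤ (1 - δ) ^ m * n.choose m := hp
    have hstep : ((Q.filter fun Y =>
        ((X.image fun x => (A.image (· + x)) ∩ Y).vcDim ≤ d)).card : ℝ)
        ≤ ∑ P2 ∈ S.powersetCard 2, ((Q.filter fun Y => ∃ x ∈ P2, ∃ y ∈ P2, x ≠ y ∧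
          (A.image (· + x)) ∩ Y = (A.image (· + y)) ∩ Y).card : ℝ) := by
      have h1 := card_le_card hsub
      have h2 := Finset.card_biUnion_le (s := S.powersetCard 2)
        (t := fun P2 => Q.filter fun Y => ∃ x ∈ P2, ∃ y ∈ P2, x ≠ y ∧
          (A.image (· + x)) ∩ Y = (A.image (· + y)) ∩ Y)
      exact_mod_cast le_trans h1 h2
    calc ((Q.filter fun Y =>
        ((X.image fun x => (A.image (· + x)) ∩ Y).vcDim ≤ d)).card : ℝ)
        ≤ ∑ P2 ∈ S.powersetCard 2, ((Q.filter fun Y => ∃ x ∈ P2, ∃ y ∈ P2, x ≠ y ∧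
          (A.image (· + x)) ∩ Y = (A.image (· + y)) ∩ Y).card : ℝ) := hstep
    _ ≤ ∑ _P2 ∈ S.powersetCard 2, (1 - δ) ^ m * (n.choose m : ℝ) := Finset.sum_le_sum hcb
    _ = ((2 * t + 1).choose 2 : ℝ) * ((1 - δ) ^ m * n.choose m) := by
        rw [Finset.sum_const, card_powersetCard, hScard, nsmul_eq_mul]
    _ ≤ (3 * (t : ℝ) ^ 2) * ((1 - δ) ^ m * n.choose m) := by
        apply mul_le_mul_of_nonneg_right _
          (mul_nonneg (pow_nonneg (by linarith) m) (Nat.cast_nonneg _))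
        exact_mod_cast hchoose2
    _ = 3 * (t : ℝ) ^ 2 * (1 - δ) ^ m * n.choose m := by ring
  set NB := fun I : Finset G => I.biUnion fun y => B.image (y + ·) with hNB
  have hcover : ∀ X ∈ P, (¬ ∃ S : Finset G, S ⊆ X ∧ S.card = 2 * t + 1 ∧
      (∀ x ∈ S, ∀ y ∈ S, x ≠ y → x - y ∉ B)) →
      ∃ j, j < 2 * t + 1 ∧ ∃ I : Finset G, I.card = j ∧ I ⊆ X ∧ X ⊆ NB I := by
    intro X _hX hbad
    set F := X.powerset.filter (fun S => ∀ x ∈ S, ∀ y ∈ S, x ≠ y → x - y ∉ B) with hF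
    have hFne : F.Nonempty := ⟨∅, by simp [hF]⟩
    obtain ⟨I, hIF, hImax⟩ := Finset.exists_max_image F card hFne
    rw [hF, mem_filter, mem_powerset] at hIF
    obtain ⟨hIX, hIind⟩ := hIF
    have hI2t : I.card ≤ 2 * t := by
      by_contra hI
      push_neg at hI
      obtain ⟨S, hSI, hScard⟩ := exists_subset_card_eq (n := 2 * t + 1)
        (by omega : 2 * t + 1 ≤ I.card)
      exact hbad ⟨S, hSI.trans hIX, hScard,
        fun x hx y hy hxy => hIind x (hSI hx) y (hSI hy) hxy⟩
    refine ⟨I.card, by omega, I, rfl, hIX, ?_⟩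
    intro x hx
    by_cases hxI : x ∈ I
    · exact mem_biUnion.2 ⟨x, hxI, mem_image.2 ⟨0, hB0, add_zero x⟩⟩
    · have hJ : ¬ (∀ u ∈ insert x I, ∀ v ∈ insert x I, u ≠ v → u - v ∉ B) := by
        intro hind
        have hmem : insert x I ∈ F := by
          rw [hF, mem_filter, mem_powerset]
          exact ⟨insert_subset_iff.2 ⟨hx, hIX⟩, hind⟩
        have hle := hImax _ hmem
        rw [card_insert_of_notMem hxI] at hle
        omega
      push_neg at hJ
      obtain ⟨u, hu, v, hv, huv, huvB⟩ := hJ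
      rw [mem_insert] at hu hv
      rcases hu with rfl | huI
      · rcases hv with rfl | hvI
        · exact absurd rfl huv
        · exact mem_biUnion.2 ⟨v, hvI, mem_image.2 ⟨u - v, huvB, by abel⟩⟩
      · rcases hv with rfl | hvI
        · refine mem_biUnion.2 ⟨u, huI, mem_image.2 ⟨v - u, ?_, by abel⟩⟩
          have hs := hBsymm _ huvB
          rwa [neg_sub] at hs
        · exact absurd huvB (hIind u huI v hvI huv)
  set Bad := P.filter (fun X => ¬ ∃ S : Finset G, S ⊆ X ∧ S.card = 2 * t + 1 ∧
      (∀ x ∈ S, ∀ y ∈ S, x ≠ y → x - y ∉ B)) with hBad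
  have hBadsub : Bad ⊆ (range (2 * t + 1)).biUnion (fun j =>
      ((univ : Finset G).powersetCard j).biUnion (fun I =>
        P.filter (fun X => I ⊆ X ∧ X ⊆ NB I))) := by
    intro X hX
    rw [hBad, mem_filter] at hX
    obtain ⟨hXP, hXbad⟩ := hX
    obtain ⟨j, hj, I, hIcard, hIX, hXN⟩ := hcover X hXP hXbad
    exact mem_biUnion.2 ⟨j, mem_range.2 hj, mem_biUnion.2 ⟨I,
      mem_powersetCard.2 ⟨subset_univ _, hIcard⟩, mem_filter.2 ⟨hXP, hIX, hXN⟩⟩⟩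
  set a := 2 * t * B.card with ha
  have hcount : ∀ j, ∀ I : Finset G, I.card = j → j ≤ 2 * t →
      (P.filter (fun X => I ⊆ X ∧ X ⊆ NB I)).card ≤ a.choose (k - j) := by
    intro j I hIcard hj
    have hNBcard : (NB I).card ≤ a := by
      calc (NB I).card ≤ ∑ y ∈ I, (B.image (y + ·)).card := card_biUnion_le
      _ ≤ ∑ _y ∈ I, B.card := sum_le_sum (fun y _ => card_image_le)
      _ = j * B.card := by rw [sum_const, hIcard, smul_eq_mul]
      _ ≤ 2 * t * B.card := Nat.mul_le_mul_right _ hj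
    have hinj : (P.filter (fun X => I ⊆ X ∧ X ⊆ NB I)).card
        ≤ ((NB I).powersetCard (k - j)).card := by
      apply card_le_card_of_injOn (fun X => X \ I)
      · intro X hX
        rw [mem_coe, mem_filter] at hX
        obtain ⟨hXP, hIX, hXN⟩ := hX
        rw [mem_coe, mem_powersetCard]
        refine ⟨(sdiff_subset).trans hXN, ?_⟩
        rw [card_sdiff_of_subset hIX, (mem_powersetCard.1 hXP).2, hIcard]
      · intro X1 h1 X2 h2 he
        rw [mem_coe, mem_filter] at h1 h2
        have e1 : X1 = X1 \ I ∪ I := (sdiff_union_of_subset h1.2.1).symm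
        have e2 : X2 = X2 \ I ∪ I := (sdiff_union_of_subset h2.2.1).symm
        calc X1 = X1 \ I ∪ I := e1
        _ = X2 \ I ∪ I := congrArg (· ∪ I) he
        _ = X2 := e2.symm
    calc (P.filter (fun X => I ⊆ X ∧ X ⊆ NB I)).card
        ≤ ((NB I).powersetCard (k - j)).card := hinj
    _ = (NB I).card.choose (k - j) := card_powersetCard _ _
    _ ≤ a.choose (k - j) := Nat.choose_le_choose _ hNBcard
  have h6a : 6 * a < n := by
    have h61 : 6 * a = k * B.card := by rw [ha, hk]; ring
    omega
  have hkey3 : ∀ j ≤ 2 * t, 3 ^ (10 * t) * (n.choose j * a.choose (k - j))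
      ≤ 2 ^ k * n.choose k := by
    intro j hj
    have hmul : 3 ^ (k - j) * a.choose (k - j) ≤ 1 ^ (k - j) * (n - j).choose (k - j) := by
      apply aux_choose_mul_le
      intro i hi
      omega
    rw [one_pow, one_mul] at hmul
    have hjk : j ≤ k := by omega
    have hcm := Nat.choose_mul (n := n) hjk
    have hkj2 : k.choose j ≤ 2 ^ k := by
      calc k.choose j ≤ ∑ i ∈ range (k + 1), k.choose i :=
        Finset.single_le_sum (fun i _ => Nat.zero_le _) (mem_range.2 (by omega))
      _ = 2 ^ k := Nat.sum_range_choose k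
    have hpow : (3 : ℕ) ^ (10 * t) ≤ 3 ^ (k - j) := Nat.pow_le_pow_right (by norm_num) (by omega)
    calc 3 ^ (10 * t) * (n.choose j * a.choose (k - j))
        = n.choose j * (3 ^ (10 * t) * a.choose (k - j)) := by ring
    _ ≤ n.choose j * (3 ^ (k - j) * a.choose (k - j)) :=
        Nat.mul_le_mul_left _ (Nat.mul_le_mul_right _ hpow)
    _ ≤ n.choose j * (n - j).choose (k - j) := Nat.mul_le_mul_left _ hmul
    _ = n.choose k * k.choose j := hcm.symm
    _ ≤ n.choose k * 2 ^ k := Nat.mul_le_mul_left _ hkj2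
    _ = 2 ^ k * n.choose k := Nat.mul_comm _ _
  have hBadcard : 3 ^ (10 * t) * Bad.card ≤ (2 * t + 1) * (2 ^ k * n.choose k) := by
    have h1 : Bad.card ≤ ∑ j ∈ range (2 * t + 1), (n.choose j * a.choose (k - j)) := by
      calc Bad.card ≤ ((range (2 * t + 1)).biUnion (fun j =>
          ((univ : Finset G).powersetCard j).biUnion (fun I =>
            P.filter (fun X => I ⊆ X ∧ X ⊆ NB I)))).card := card_le_card hBadsub
      _ ≤ ∑ j ∈ range (2 * t + 1), (((univ : Finset G).powersetCard j).biUnion (fun I =>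
          P.filter (fun X => I ⊆ X ∧ X ⊆ NB I))).card := card_biUnion_le
      _ ≤ ∑ j ∈ range (2 * t + 1), ∑ I ∈ (univ : Finset G).powersetCard j,
          (P.filter (fun X => I ⊆ X ∧ X ⊆ NB I)).card :=
          sum_le_sum (fun j _ => card_biUnion_le)
      _ ≤ ∑ j ∈ range (2 * t + 1), ∑ _I ∈ (univ : Finset G).powersetCard j,
          a.choose (k - j) :=
          sum_le_sum (fun j hj => sum_le_sum (fun I hI =>
            hcount j I (mem_powersetCard.1 hI).2 (Nat.lt_succ_iff.1 (mem_range.1 hj))))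
      _ = ∑ j ∈ range (2 * t + 1), n.choose j * a.choose (k - j) := by
          refine Finset.sum_congr rfl (fun j _ => ?_)
          rw [sum_const, card_powersetCard, card_univ, smul_eq_mul]
    calc 3 ^ (10 * t) * Bad.card
        ≤ 3 ^ (10 * t) * ∑ j ∈ range (2 * t + 1), n.choose j * a.choose (k - j) :=
          Nat.mul_le_mul_left _ h1
    _ = ∑ j ∈ range (2 * t + 1), 3 ^ (10 * t) * (n.choose j * a.choose (k - j)) :=
          Finset.mul_sum _ _ _
    _ ≤ ∑ _j ∈ range (2 * t + 1), 2 ^ k * n.choose k :=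
          sum_le_sum (fun j hj => hkey3 j (Nat.lt_succ_iff.1 (mem_range.1 hj)))
    _ = (2 * t + 1) * (2 ^ k * n.choose k) := by rw [sum_const, card_range, smul_eq_mul]
  have hCk : (0 : ℝ) < (n.choose k : ℝ) := by exact_mod_cast Nat.choose_pos hkn
  have hCm : (0 : ℝ) < (n.choose m : ℝ) := by exact_mod_cast Nat.choose_pos hmn
  have hexp : Real.exp ((t : ℕ) : ℝ) = Real.exp 1 ^ t := by
    rw [← Real.exp_nat_mul]; norm_num
  have hstep1 : ((2 * t + 1 : ℕ) : ℝ) * 2 ^ k * Real.exp ((t : ℕ) : ℝ) < (3 : ℝ) ^ (10 * t) := by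
    have e1 : (2 : ℝ) ^ k = (4096 : ℝ) ^ t := by rw [hk, pow_mul]; norm_num
    have e2 : (3 : ℝ) ^ (10 * t) = (59049 : ℝ) ^ t := by rw [pow_mul]; norm_num
    have hexp3 : Real.exp ((t : ℕ) : ℝ) < (3 : ℝ) ^ t := by
      rw [hexp]
      apply pow_lt_pow_left₀ (lt_trans Real.exp_one_lt_d9 (by norm_num)) (Real.exp_pos 1).le
      omega
    have h2t : ((2 * t + 1 : ℕ) : ℝ) ≤ (3 : ℝ) ^ t := by
      exact_mod_cast aux_two_mul_add_one_le t
    calc ((2 * t + 1 : ℕ) : ℝ) * 2 ^ k * Real.exp ((t : ℕ) : ℝ)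
        ≤ (3 : ℝ) ^ t * 4096 ^ t * Real.exp ((t : ℕ) : ℝ) := by
          rw [e1]
          exact mul_le_mul_of_nonneg_right
            (mul_le_mul_of_nonneg_right h2t (by positivity)) (Real.exp_pos _).le
    _ < (3 : ℝ) ^ t * 4096 ^ t * 3 ^ t := by
          exact mul_lt_mul_of_pos_left hexp3 (by positivity)
    _ = (36864 : ℝ) ^ t := by rw [← mul_pow, ← mul_pow]; norm_num
    _ ≤ (59049 : ℝ) ^ t := pow_le_pow_left₀ (by norm_num) (by norm_num) t
    _ = (3 : ℝ) ^ (10 * t) := e2.symm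
  have hfrac : ((2 * t + 1 : ℕ) : ℝ) * 2 ^ k < Real.exp (-((t : ℕ) : ℝ)) * 3 ^ (10 * t) := by
    rw [Real.exp_neg, inv_mul_eq_div, lt_div_iff₀ (Real.exp_pos _)]
    exact hstep1
  have hBadR : (Bad.card : ℝ) < Real.exp (-((t : ℕ) : ℝ)) * n.choose k := by
    have h0 : (0 : ℝ) < (3 : ℝ) ^ (10 * t) := by positivity
    have h1 : (Bad.card : ℝ) * 3 ^ (10 * t) ≤ ((2 * t + 1 : ℕ) : ℝ) * 2 ^ k * n.choose k := by
      calc (Bad.card : ℝ) * 3 ^ (10 * t) = ((3 ^ (10 * t) * Bad.card : ℕ) : ℝ) := by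
            push_cast; ring
      _ ≤ (((2 * t + 1) * (2 ^ k * n.choose k) : ℕ) : ℝ) := by exact_mod_cast hBadcard
      _ = ((2 * t + 1 : ℕ) : ℝ) * 2 ^ k * n.choose k := by push_cast; ring
    have h2 : ((2 * t + 1 : ℕ) : ℝ) * 2 ^ k * (n.choose k : ℝ)
        < Real.exp (-((t : ℕ) : ℝ)) * 3 ^ (10 * t) * n.choose k :=
      mul_lt_mul_of_pos_right hfrac hCk
    have h3 : (Bad.card : ℝ) * 3 ^ (10 * t)
        < Real.exp (-((t : ℕ) : ℝ)) * n.choose k * 3 ^ (10 * t) := by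
      calc (Bad.card : ℝ) * 3 ^ (10 * t)
          ≤ ((2 * t + 1 : ℕ) : ℝ) * 2 ^ k * n.choose k := h1
      _ < Real.exp (-((t : ℕ) : ℝ)) * 3 ^ (10 * t) * n.choose k := h2
      _ = Real.exp (-((t : ℕ) : ℝ)) * n.choose k * 3 ^ (10 * t) := by ring
    exact lt_of_mul_lt_mul_right h3 h0.le
  -- Step A : bound the product filter by a sum over X
  have hTle : (((P ×ˢ Q).filter fun p : Finset G × Finset G =>
      ((p.1.image fun x => (A.image (· + x)) ∩ p.2).vcDim ≤ d)).card : ℝ)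
      ≤ ∑ X ∈ P, ((Q.filter fun Y =>
        ((X.image fun x => (A.image (· + x)) ∩ Y).vcDim ≤ d)).card : ℝ) := by
    have hsub : ((P ×ˢ Q).filter fun p : Finset G × Finset G =>
        ((p.1.image fun x => (A.image (· + x)) ∩ p.2).vcDim ≤ d))
        ⊆ P.biUnion (fun X => (Q.filter fun Y =>
          ((X.image fun x => (A.image (· + x)) ∩ Y).vcDim ≤ d)).image (fun Y => (X, Y))) := by
      intro p hp
      rw [mem_filter, mem_product] at hp
      obtain ⟨⟨h1, h2⟩, h3⟩ := hp
      exact mem_biUnion.2 ⟨p.1, h1, mem_image.2 ⟨p.2, mem_filter.2 ⟨h2, h3⟩, by simp⟩⟩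
    have h1 := card_le_card hsub
    have h2 := Finset.card_biUnion_le (s := P) (t := fun X => (Q.filter fun Y =>
      ((X.image fun x => (A.image (· + x)) ∩ Y).vcDim ≤ d)).image (fun Y => (X, Y)))
    have h3 : ∀ X ∈ P, ((Q.filter fun Y =>
        ((X.image fun x => (A.image (· + x)) ∩ Y).vcDim ≤ d)).image (fun Y => (X, Y))).card
        ≤ (Q.filter fun Y =>
        ((X.image fun x => (A.image (· + x)) ∩ Y).vcDim ≤ d)).card := fun X _ => card_image_le
    have h4 := le_trans h1 (le_trans h2 (sum_le_sum h3))
    exact_mod_cast h4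
  have hQc : Q.card = n.choose m := by rw [hQ, card_powersetCard, card_univ]
  have hPc : P.card = n.choose k := by rw [hP, card_powersetCard, card_univ]
  have hsum := Finset.sum_filter_add_sum_filter_not P (fun X => ¬ ∃ S : Finset G, S ⊆ X ∧
      S.card = 2 * t + 1 ∧ (∀ x ∈ S, ∀ y ∈ S, x ≠ y → x - y ∉ B))
      (fun X => ((Q.filter fun Y =>
        ((X.image fun x => (A.image (· + x)) ∩ Y).vcDim ≤ d)).card : ℝ))
  have hbadpart : ∑ X ∈ Bad, ((Q.filter fun Y =>
      ((X.image fun x => (A.image (· + x)) ∩ Y).vcDim ≤ d)).card : ℝ)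
      < Real.exp (-((t : ℕ) : ℝ)) * n.choose k * n.choose m := by
    have h1 : ∀ X ∈ Bad, ((Q.filter fun Y =>
        ((X.image fun x => (A.image (· + x)) ∩ Y).vcDim ≤ d)).card : ℝ)
        ≤ (n.choose m : ℝ) := by
      intro X _
      have h2 := card_filter_le Q (fun Y =>
        ((X.image fun x => (A.image (· + x)) ∩ Y).vcDim ≤ d))
      rw [hQc] at h2
      exact_mod_cast h2
    calc ∑ X ∈ Bad, ((Q.filter fun Y =>
        ((X.image fun x => (A.image (· + x)) ∩ Y).vcDim ≤ d)).card : ℝ)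
        ≤ ∑ _X ∈ Bad, (n.choose m : ℝ) := sum_le_sum h1
    _ = (Bad.card : ℝ) * n.choose m := by rw [sum_const, nsmul_eq_mul]
    _ < Real.exp (-((t : ℕ) : ℝ)) * n.choose k * n.choose m :=
        mul_lt_mul_of_pos_right hBadR hCm
  have hbnd0 : (0 : ℝ) ≤ 3 * (t : ℝ) ^ 2 * (1 - δ) ^ m * n.choose m := by
    apply mul_nonneg (mul_nonneg (by positivity) (pow_nonneg (by linarith) m)) (Nat.cast_nonneg _)
  have hgoodpart : ∑ X ∈ P.filter (fun X => ¬¬ ∃ S : Finset G, S ⊆ X ∧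
      S.card = 2 * t + 1 ∧ (∀ x ∈ S, ∀ y ∈ S, x ≠ y → x - y ∉ B)),
      ((Q.filter fun Y =>
        ((X.image fun x => (A.image (· + x)) ∩ Y).vcDim ≤ d)).card : ℝ)
      ≤ (n.choose k : ℝ) * (3 * (t : ℝ) ^ 2 * (1 - δ) ^ m * n.choose m) := by
    have h1 : ∀ X ∈ P.filter (fun X => ¬¬ ∃ S : Finset G, S ⊆ X ∧
        S.card = 2 * t + 1 ∧ (∀ x ∈ S, ∀ y ∈ S, x ≠ y → x - y ∉ B)),
        ((Q.filter fun Y =>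
          ((X.image fun x => (A.image (· + x)) ∩ Y).vcDim ≤ d)).card : ℝ)
        ≤ 3 * (t : ℝ) ^ 2 * (1 - δ) ^ m * n.choose m := by
      intro X hX
      rw [mem_filter] at hX
      obtain ⟨S, hS1, hS2, hS3⟩ := not_not.1 hX.2
      exact hgood X S hS1 hS2 hS3
    calc ∑ X ∈ P.filter (fun X => ¬¬ ∃ S : Finset G, S ⊆ X ∧
        S.card = 2 * t + 1 ∧ (∀ x ∈ S, ∀ y ∈ S, x ≠ y → x - y ∉ B)),
        ((Q.filter fun Y =>
          ((X.image fun x => (A.image (· + x)) ∩ Y).vcDim ≤ d)).card : ℝ)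
        ≤ ∑ _X ∈ P.filter (fun X => ¬¬ ∃ S : Finset G, S ⊆ X ∧
          S.card = 2 * t + 1 ∧ (∀ x ∈ S, ∀ y ∈ S, x ≠ y → x - y ∉ B)),
          (3 * (t : ℝ) ^ 2 * (1 - δ) ^ m * n.choose m) := sum_le_sum h1
    _ = ((P.filter (fun X => ¬¬ ∃ S : Finset G, S ⊆ X ∧
          S.card = 2 * t + 1 ∧ (∀ x ∈ S, ∀ y ∈ S, x ≠ y → x - y ∉ B))).card : ℝ)
          * (3 * (t : ℝ) ^ 2 * (1 - δ) ^ m * n.choose m) := by rw [sum_const, nsmul_eq_mul]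
    _ ≤ (n.choose k : ℝ) * (3 * (t : ℝ) ^ 2 * (1 - δ) ^ m * n.choose m) := by
        apply mul_le_mul_of_nonneg_right _ hbnd0
        have h2 := card_filter_le P (fun X => ¬¬ ∃ S : Finset G, S ⊆ X ∧
          S.card = 2 * t + 1 ∧ (∀ x ∈ S, ∀ y ∈ S, x ≠ y → x - y ∉ B))
        rw [hPc] at h2
        exact_mod_cast h2
  have hfinal : (((P ×ˢ Q).filter fun p : Finset G × Finset G =>
      ((p.1.image fun x => (A.image (· + x)) ∩ p.2).vcDim ≤ d)).card : ℝ)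
      < (Real.exp (-((t : ℕ) : ℝ)) + 3 * ((t : ℕ) : ℝ) ^ 2 * (1 - δ) ^ m)
        * ((n.choose k : ℝ) * (n.choose m : ℝ)) := by
    calc (((P ×ˢ Q).filter fun p : Finset G × Finset G =>
        ((p.1.image fun x => (A.image (· + x)) ∩ p.2).vcDim ≤ d)).card : ℝ)
        ≤ ∑ X ∈ P, ((Q.filter fun Y =>
          ((X.image fun x => (A.image (· + x)) ∩ Y).vcDim ≤ d)).card : ℝ) := hTle
    _ = ∑ X ∈ Bad, ((Q.filter fun Y =>
          ((X.image fun x => (A.image (· + x)) ∩ Y).vcDim ≤ d)).card : ℝ)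
        + ∑ X ∈ P.filter (fun X => ¬¬ ∃ S : Finset G, S ⊆ X ∧
          S.card = 2 * t + 1 ∧ (∀ x ∈ S, ∀ y ∈ S, x ≠ y → x - y ∉ B)),
          ((Q.filter fun Y =>
            ((X.image fun x => (A.image (· + x)) ∩ Y).vcDim ≤ d)).card : ℝ) := hsum.symm
    _ < Real.exp (-((t : ℕ) : ℝ)) * n.choose k * n.choose m
        + (n.choose k : ℝ) * (3 * (t : ℝ) ^ 2 * (1 - δ) ^ m * n.choose m) :=
        add_lt_add_of_lt_of_le hbadpart hgoodpart
    _ = (Real.exp (-((t : ℕ) : ℝ)) + 3 * ((t : ℕ) : ℝ) ^ 2 * (1 - δ) ^ m)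
        * ((n.choose k : ℝ) * (n.choose m : ℝ)) := by ring
  have hc1 : ((t : ℕ) : ℝ) = (m : ℝ) ^ d := by rw [ht]; push_cast; ring
  have hc2 : (m : ℝ) ^ (2 * d) = ((t : ℕ) : ℝ) ^ 2 := by
    rw [hc1, ← pow_mul, mul_comm 2 d]
  rw [← hc1, hc2] at hprob
  linarith [hfinal, hprob]
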